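/- arXiv:2605.21658 — 2 statements merged into one kernel-verified Lean document; each statement's English description precedes it below -/
import Mathlib

section
/- Let k be odd, S = ℤ/2kℤ, G = Aff(ℤ/2kℤ), K₀ ≤ G the subgroup with even translation part, H ≤ K₀, q a quasipolarity, and L = ⟨H, q⟩. Then with K = L ∩ K₀, every L-orbit on S decomposes as Kx ⊔ qKx with |Kx| = |qKx|, and the number of subsets D of S with qD = ∁D and HD = D equals 2^{|S/L|}, where |S/L| is the number of L-orbits on S. -/
attribute [local instance] Classical.propDecidable


open Pointwise

def affPerm (n : ℕ) (u : ZMod n) (v : (ZMod n)ˣ) : Equiv.Perm (ZMod n) where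
  toFun x := v * x + u
  invFun x := (v⁻¹ : (ZMod n)ˣ) * (x - u)
  left_inv x := by simp
  right_inv x := by simp

def Aff (n : ℕ) : Subgroup (Equiv.Perm (ZMod n)) where
  carrier := {σ | ∃ u v, σ = affPerm n u v}
  one_mem' := ⟨0, 1, Equiv.ext fun x => by simp [affPerm]⟩
  mul_mem' := by
    rintro σ τ ⟨u1, v1, rfl⟩ ⟨u2, v2, rfl⟩
    exact ⟨v1 * u2 + u1, v1 * v2, Equiv.ext fun x => by
      simp [affPerm, Equiv.Perm.mul_apply, mul_add, mul_assoc, add_assoc]⟩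
  inv_mem' := by
    rintro σ ⟨u, v, rfl⟩
    refine ⟨-(↑v⁻¹ * u), v⁻¹, Equiv.ext fun x => ?_⟩
    simp [affPerm, Equiv.Perm.inv_def, Equiv.symm, mul_sub, sub_eq_add_neg, mul_add, mul_neg]

def AffK0 (n : ℕ) : Subgroup (Equiv.Perm (ZMod n)) where
  carrier := {σ | ∃ u v, Even u ∧ σ = affPerm n u v}
  one_mem' := ⟨0, 1, Even.zero, Equiv.ext fun x => by simp [affPerm]⟩
  mul_mem' := by
    rintro σ τ ⟨u1, v1, hu1, rfl⟩ ⟨u2, v2, hu2, rfl⟩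
    exact ⟨v1 * u2 + u1, v1 * v2, (hu2.mul_left _).add hu1, Equiv.ext fun x => by
      simp [affPerm, Equiv.Perm.mul_apply, mul_add, mul_assoc, add_assoc]⟩
  inv_mem' := by
    rintro σ ⟨u, v, hu, rfl⟩
    refine ⟨-(↑v⁻¹ * u), v⁻¹, (hu.mul_left _).neg, Equiv.ext fun x => ?_⟩
    simp [affPerm, Equiv.Perm.inv_def, Equiv.symm, mul_sub, sub_eq_add_neg, mul_add, mul_neg]

section Helpers
variable {k : ℕ} [NeZero (2*k)]

noncomputable def Par (k : ℕ) [NeZero (2*k)] : ZMod (2*k) →+* ZMod 2 :=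
  ZMod.castHom ⟨k, rfl⟩ (ZMod 2)

lemma par_unit (v : (ZMod (2*k))ˣ) : Par k (v : ZMod (2*k)) = 1 := by
  have h : Par k v * Par k (↑v⁻¹) = 1 := by
    rw [← map_mul]; simp
  revert h
  generalize Par k (v : ZMod (2*k)) = a
  generalize Par k ((v⁻¹ : (ZMod (2*k))ˣ) : ZMod (2*k)) = b
  revert a b; decide

lemma par_even {u : ZMod (2*k)} (h : Even u) : Par k u = 0 := by
  obtain ⟨w, rfl⟩ := h
  rw [map_add]
  exact CharTwo.add_self_eq_zero _

lemma even_of_par {u : ZMod (2*k)} (h : Par k u = 0) : Even u := by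
  have h2 : ((u.val : ℕ) : ZMod 2) = 0 := by
    rwa [Par, ZMod.castHom_apply, ZMod.cast_eq_val] at h
  rw [ZMod.natCast_eq_zero_iff] at h2
  obtain ⟨m, hm⟩ := h2
  have hu : ((u.val : ℕ) : ZMod (2*k)) = u := by
    rw [ZMod.natCast_val, ZMod.cast_id]
  rw [← hu, hm]
  exact ⟨(m : ZMod (2*k)), by push_cast; ring⟩

lemma affPerm_apply (n : ℕ) (u : ZMod n) (v : (ZMod n)ˣ) (x : ZMod n) :
    affPerm n u v x = v * x + u := rfl

lemma aff_par {σ : Equiv.Perm (ZMod (2*k))} (hσ : σ ∈ Aff (2*k)) (x : ZMod (2*k)) :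
    Par k (σ x) = Par k (σ 0) + Par k x := by
  obtain ⟨u, v, rfl⟩ := hσ
  simp only [affPerm_apply, mul_zero, zero_add, map_add, map_mul, par_unit, one_mul]
  ring

lemma memK0_iff {σ : Equiv.Perm (ZMod (2*k))} (hσ : σ ∈ Aff (2*k)) :
    σ ∈ AffK0 (2*k) ↔ Par k (σ 0) = 0 := by
  constructor
  · rintro ⟨u, v, hu, rfl⟩
    simp only [affPerm_apply, mul_zero, zero_add]
    exact par_even hu
  · obtain ⟨u, v, rfl⟩ := hσ
    intro h
    simp only [affPerm_apply, mul_zero, zero_add] at h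
    exact ⟨u, v, even_of_par h, rfl⟩

lemma affK0_le_aff (n : ℕ) : AffK0 n ≤ Aff n := by
  rintro σ ⟨u, v, hu, rfl⟩
  exact ⟨u, v, rfl⟩

lemma fixpt (hk : Odd k) (u w : ZMod (2*k)) (hu : u = w + w) (v : ZMod (2*k))
    (hq0 : v * u + u = 0) : v * (((k+1)/2 : ℕ) • u) + u = ((k+1)/2 : ℕ) • u := by
  set t : ℕ := (k+1)/2 with ht
  have h2t : 2 * t = k + 1 := by
    obtain ⟨m, rfl⟩ := hk
    omega
  have hku : (k : ℕ) • u = 0 := by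
    rw [hu, smul_add, ← add_nsmul]
    have h : k + k = 2 * k := by ring
    rw [h, nsmul_eq_mul, ZMod.natCast_self, zero_mul]
  have hvu : v * u = -u := by linear_combination hq0
  have hv : v * (t • u) = -(t • u) := by
    rw [mul_smul_comm, hvu, smul_neg]
  rw [hv]
  have h2 : t • u + t • u = u := by
    rw [← add_nsmul]
    have h : t + t = 2 * t := by ring
    rw [h, h2t, add_nsmul, one_nsmul, hku, zero_add]
  linear_combination -h2

lemma zmod2_resolve : ∀ a : ZMod 2, a ≠ 0 → a = 1 := by decide
lemma zmod2_cases : ∀ a : ZMod 2, a = 0 ∨ a = 1 := by decide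
lemma zmod2_add_one_ne : ∀ a : ZMod 2, a + 1 ≠ a := by decide
lemma zmod2_eq_of_add : ∀ a b : ZMod 2, a + b = 0 → b = a := by decide
lemma zmod2_add_one_iff : ∀ a c : ZMod 2, (a + 1 = c ↔ ¬ (a = c)) := by decide

lemma iff_helper (p : Prop) (a b : ZMod 2) :
    ((p ↔ b = 0) ↔ a = 0) ↔ (p ↔ a + b = 0) := by
  rcases zmod2_cases a with ha | ha <;> rcases zmod2_cases b with hb | hb <;>
    subst ha <;> subst hb <;>
    simp [show (0:ZMod 2) + 0 = 0 by decide, show (0:ZMod 2) + 1 ≠ 0 by decide,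
      show (1:ZMod 2) + 0 ≠ 0 by decide, show (1:ZMod 2) + 1 = 0 by decide,
      show (1:ZMod 2) ≠ 0 by decide, not_not]

lemma q_zero_odd (hk : Odd k) {q : Equiv.Perm (ZMod (2*k))} (hq : q ∈ Aff (2*k))
    (hq2 : q ^ 2 = 1) (hqf : ∀ x, q x ≠ x) : Par k (q 0) = 1 := by
  apply zmod2_resolve
  intro h0
  obtain ⟨u, v, hu, hqe⟩ := (memK0_iff hq).mpr h0
  obtain ⟨w, hw⟩ := hu
  have hq00 : q (q 0) = 0 := by
    have h : (q * q) 0 = (1 : Equiv.Perm (ZMod (2*k))) 0 := by rw [← sq, hq2]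
    simpa [Equiv.Perm.mul_apply] using h
  have hu0 : q 0 = u := by rw [hqe]; simp [affPerm_apply]
  rw [hu0, hqe, affPerm_apply] at hq00
  have hfix := fixpt hk u w hw v hq00
  exact hqf _ (by rw [hqe, affPerm_apply]; exact hfix)

end Helpers

/-- For `k` odd, `H ≤ K₀`, `q` a quasipolarity and `L = ⟨H, q⟩`, with `K = L ∩ K₀` every
`L`-orbit decomposes as `Kx ⊔ qKx` with `|Kx| = |qKx|`, and the number of subsets `D` with
`qD = ∁D` and `HD = D` equals `2^{|S/L|}`. -/
theorem stmt_11 (k : ℕ) (hk : Odd k) (hk0 : 0 < k) [NeZero (2 * k)]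
    (H : Subgroup (Equiv.Perm (ZMod (2 * k)))) (hH : H ≤ AffK0 (2 * k))
    (q : Equiv.Perm (ZMod (2 * k))) (hq : q ∈ Aff (2 * k)) (hq2 : q ^ 2 = 1)
    (hqf : ∀ x : ZMod (2 * k), q x ≠ x) :
    (∀ x : ZMod (2 * k),
      (MulAction.orbit ((H ⊔ Subgroup.zpowers q) : Subgroup _) x =
          MulAction.orbit (((H ⊔ Subgroup.zpowers q) ⊓ AffK0 (2 * k)) : Subgroup _) x ∪
            q • MulAction.orbit (((H ⊔ Subgroup.zpowers q) ⊓ AffK0 (2 * k)) : Subgroup _) x) ∧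
        Disjoint (MulAction.orbit (((H ⊔ Subgroup.zpowers q) ⊓ AffK0 (2 * k)) : Subgroup _) x)
          (q • MulAction.orbit (((H ⊔ Subgroup.zpowers q) ⊓ AffK0 (2 * k)) : Subgroup _) x) ∧
        Nat.card (MulAction.orbit (((H ⊔ Subgroup.zpowers q) ⊓ AffK0 (2 * k)) : Subgroup _) x) =
          Nat.card
            (q • MulAction.orbit (((H ⊔ Subgroup.zpowers q) ⊓ AffK0 (2 * k)) : Subgroup _) x :
              Set (ZMod (2 * k)))) ∧
    (Finset.univ.filter (fun D : Finset (ZMod (2 * k)) =>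
        q • D = Dᶜ ∧ ∀ h ∈ H, h • D = D)).card =
      2 ^ Nat.card
            (MulAction.orbitRel.Quotient ((H ⊔ Subgroup.zpowers q) : Subgroup _)
              (ZMod (2 * k))) := by
  set L := ((H ⊔ Subgroup.zpowers q) : Subgroup (Equiv.Perm (ZMod (2*k)))) with hLdef
  have hAff : AffK0 (2*k) ≤ Aff (2*k) := affK0_le_aff (2*k)
  have hLA : L ≤ Aff (2*k) := sup_le (le_trans hH hAff) ((Subgroup.zpowers_le).mpr hq)
  have hqq : q⁻¹ = q := by
    rw [sq] at hq2
    exact inv_eq_of_mul_eq_one_right hq2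
  have hq0 : Par k (q 0) = 1 := q_zero_odd hk hq hq2 hqf
  have hqpar : ∀ x, Par k (q x) = Par k x + 1 := fun x => by
    rw [aff_par hq x, hq0, add_comm]
  have hqL : q ∈ L := Subgroup.mem_sup_right (Subgroup.mem_zpowers q)
  have hKpar : ∀ σ, σ ∈ L ⊓ AffK0 (2*k) → ∀ x, Par k (σ x) = Par k x := by
    intro σ hσ x
    obtain ⟨hσL, hσ0⟩ := Subgroup.mem_inf.mp hσ
    rw [aff_par (hLA hσL) x, (memK0_iff (hLA hσL)).mp hσ0, zero_add]
  have hqinv : ∀ y, q (q y) = y := fun y => by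
    have h : (q * q) y = (1 : Equiv.Perm (ZMod (2*k))) y := by rw [← sq, hq2]
    simpa [Equiv.Perm.mul_apply] using h
  constructor
  · intro x
    refine ⟨?_, ?_, ?_⟩
    · ext y
      constructor
      · rintro ⟨⟨g, hgL⟩, rfl⟩
        show g • x ∈ _
        by_cases hc : Par k (g 0) = 0
        · exact Or.inl ⟨⟨g, Subgroup.mem_inf.mpr ⟨hgL, (memK0_iff (hLA hgL)).mpr hc⟩⟩, rfl⟩
        · right
          have hqgL : q * g ∈ L := mul_mem hqL hgL
          have hqgK : q * g ∈ L ⊓ AffK0 (2*k) := by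
            refine Subgroup.mem_inf.mpr ⟨hqgL, (memK0_iff (hLA hqgL)).mpr ?_⟩
            show Par k (q (g 0)) = 0
            rw [hqpar, zmod2_resolve _ hc]
            decide
          refine Set.mem_smul_set.mpr ⟨(q * g) x, ⟨⟨q * g, hqgK⟩, rfl⟩, ?_⟩
          show q ((q * g) x) = g • x
          simp [Equiv.Perm.mul_apply, hqinv]
      · rintro (⟨⟨g, hg⟩, rfl⟩ | hy)
        · exact ⟨⟨g, (Subgroup.mem_inf.mp hg).1⟩, rfl⟩
        · obtain ⟨z, ⟨⟨g, hg⟩, rfl⟩, rfl⟩ := Set.mem_smul_set.mp hy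
          refine ⟨⟨q * g, mul_mem hqL (Subgroup.mem_inf.mp hg).1⟩, ?_⟩
          show (q * g) x = q • (g • x)
          simp [Equiv.Perm.mul_apply]
    · rw [Set.disjoint_left]
      rintro y ⟨⟨g, hg⟩, rfl⟩ hmem
      obtain ⟨z, ⟨⟨g', hg'⟩, rfl⟩, hz⟩ := Set.mem_smul_set.mp hmem
      have hz' : q (g' x) = g x := hz
      have h1 : Par k (g x) = Par k x := hKpar g hg x
      have h2 : Par k (q (g' x)) = Par k x + 1 := by
        rw [hqpar, hKpar g' hg' x]
      rw [hz', h1] at h2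
      exact zmod2_add_one_ne _ h2.symm
    · rw [Nat.card_coe_set_eq, Nat.card_coe_set_eq, Set.ncard_smul_set]
  · have hHL : ∀ h ∈ H, h ∈ L := fun h hh => Subgroup.mem_sup_left hh
    have hHpar : ∀ h ∈ H, ∀ y : ZMod (2*k), Par k (h y) = Par k y := by
      intro h hh y
      rw [aff_par (hLA (hHL h hh)) y, (memK0_iff (hLA (hHL h hh))).mp (hH hh), zero_add]
    have hLC : Subgroup.closure ((H : Set _) ∪ {q}) = L := by
      rw [Subgroup.closure_union, Subgroup.closure_eq, ← Subgroup.zpowers_eq_closure]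
    have key : ∀ (D : Finset (ZMod (2*k))), (∀ x, q x ∈ D ↔ x ∉ D) →
        (∀ h ∈ H, ∀ x, h x ∈ D ↔ x ∈ D) →
        ∀ g ∈ L, ∀ x : ZMod (2*k), (g x ∈ D ↔ (x ∈ D ↔ Par k (g 0) = 0)) := by
      intro D hqD hHD g hg
      rw [← hLC] at hg
      induction hg using Subgroup.closure_induction with
      | mem σ hσ =>
        intro x
        rcases hσ with hσ | hσ
        · rw [hHD σ hσ x]
          have hp : Par k (σ 0) = 0 := by simpa using hHpar σ hσ 0
          simp [hp]
        · rw [Set.mem_singleton_iff] at hσ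
          subst hσ
          rw [hqD x, hq0]
          simp [show ¬((1:ZMod 2) = 0) by decide]
      | one =>
        intro x
        simp
      | mul σ τ hσm hτm ihσ ihτ =>
        intro x
        have hσL : σ ∈ L := hLC ▸ hσm
        have hτL : τ ∈ L := hLC ▸ hτm
        have hc : Par k ((σ * τ) 0) = Par k (σ 0) + Par k (τ 0) := by
          show Par k (σ (τ 0)) = _
          rw [aff_par (hLA hσL) (τ 0)]
        have hmulapp : (σ * τ) x = σ (τ x) := rfl
        rw [hmulapp, ihσ (τ x), ihτ x, hc]
        exact iff_helper _ _ _
      | inv σ hσm ihσ =>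
        intro x
        have hσL : σ ∈ L := hLC ▸ hσm
        have hpinv : Par k (σ⁻¹ 0) = Par k (σ 0) := by
          apply zmod2_eq_of_add
          have h := aff_par (hLA hσL) (σ⁻¹ 0)
          rw [show σ (σ⁻¹ (0 : ZMod (2*k))) = 0 from Equiv.apply_symm_apply σ 0] at h
          simpa using h.symm
        have h2 := ihσ (σ⁻¹ x)
        rw [show σ (σ⁻¹ x) = x from Equiv.apply_symm_apply σ x] at h2
        rw [hpinv]
        tauto
    have hmem_smul : ∀ (g : Equiv.Perm (ZMod (2*k))) (D : Finset (ZMod (2*k)))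
        (y : ZMod (2*k)), y ∈ g • D ↔ g⁻¹ y ∈ D := by
      intro g D y
      constructor
      · intro h
        exact Finset.inv_smul_mem_iff.mpr h
      · intro h
        exact Finset.inv_smul_mem_iff.mp h
    have cond_to_q : ∀ D : Finset (ZMod (2*k)), q • D = Dᶜ → ∀ x, (q x ∈ D ↔ x ∉ D) := by
      intro D hD x
      rw [← Finset.mem_compl, ← hD, hmem_smul q D x, hqq]
    have cond_to_H : ∀ D : Finset (ZMod (2*k)), (∀ h ∈ H, h • D = D) →
        ∀ h ∈ H, ∀ x, (h x ∈ D ↔ x ∈ D) := by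
      intro D hD h hh x
      have e1 : h x ∈ h • D ↔ x ∈ D := by
        rw [hmem_smul]
        simp
      rw [hD h hh] at e1
      exact e1
    have q_to_cond : ∀ D : Finset (ZMod (2*k)), (∀ x, q x ∈ D ↔ x ∉ D) → q • D = Dᶜ := by
      intro D hD
      ext y
      rw [Finset.mem_compl, hmem_smul, hqq]
      have h2 := hD (q y)
      rw [hqinv] at h2
      tauto
    have H_to_cond : ∀ D : Finset (ZMod (2*k)), (∀ h ∈ H, ∀ x, h x ∈ D ↔ x ∈ D) →
        ∀ h ∈ H, h • D = D := by
      intro D hD h hh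
      ext y
      rw [hmem_smul]
      exact hD h⁻¹ (inv_mem hh) y
    have horb : ∀ x : ZMod (2*k), ∃ g : L, (g : Equiv.Perm (ZMod (2*k))) x =
        (Quotient.mk'' x : MulAction.orbitRel.Quotient L (ZMod (2*k))).out := by
      intro x
      have h := @Quotient.mk_out' _ (MulAction.orbitRel L (ZMod (2*k))) x
      obtain ⟨g, hg⟩ := MulAction.orbitRel_apply.mp h
      exact ⟨g, hg⟩
    have hmk : ∀ (g : Equiv.Perm (ZMod (2*k))), g ∈ L → ∀ x : ZMod (2*k),
        (Quotient.mk'' (g x) : MulAction.orbitRel.Quotient L (ZMod (2*k))) = Quotient.mk'' x := by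
      intro g hg x
      apply Quotient.sound'
      exact MulAction.orbitRel_apply.mpr ⟨⟨g, hg⟩, rfl⟩
    haveI : Fintype (MulAction.orbitRel.Quotient L (ZMod (2*k))) := Quotient.fintype _
    set Ω := MulAction.orbitRel.Quotient L (ZMod (2*k)) with hΩdef
    set Df : (Ω → Prop) → Finset (ZMod (2*k)) := fun f =>
      Finset.univ.filter
        (fun x => (f (Quotient.mk'' x) ↔ Par k x = Par k (Quotient.mk'' x : Ω).out)) with hDfdef
    have hDf_mem : ∀ f x, (x ∈ Df f ↔
        (f (Quotient.mk'' x) ↔ Par k x = Par k (Quotient.mk'' x : Ω).out)) := by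
      intro f x
      simp [hDfdef]
    have hDf_q : ∀ f, ∀ x, q x ∈ Df f ↔ x ∉ Df f := by
      intro f x
      rw [hDf_mem, hDf_mem, hmk q hqL x, hqpar x, zmod2_add_one_iff]
      tauto
    have hDf_H : ∀ f, ∀ h ∈ H, ∀ x, h x ∈ Df f ↔ x ∈ Df f := by
      intro f h hh x
      rw [hDf_mem, hDf_mem, hmk h (hHL h hh) x, hHpar h hh x]
    have hbij : (Finset.univ.filter (fun D : Finset (ZMod (2 * k)) =>
        q • D = Dᶜ ∧ ∀ h ∈ H, h • D = D)).card = (Finset.univ : Finset (Ω → Prop)).card := by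
      refine Finset.card_bij' (fun D _ => fun ω : Ω => (ω.out ∈ D : Prop))
        (fun f _ => Df f) (fun D hD => Finset.mem_univ _) ?_ ?_ ?_
      · intro f _
        refine Finset.mem_filter.mpr ⟨Finset.mem_univ _, q_to_cond _ (hDf_q f),
          H_to_cond _ (hDf_H f)⟩
      · -- left inverse : Df (fun ω => ω.out ∈ D) = D
        intro D hD
        obtain ⟨-, hc1, hc2⟩ := Finset.mem_filter.mp hD
        have hqD := cond_to_q D hc1
        have hHD := cond_to_H D hc2
        ext x
        refine Iff.trans (hDf_mem (fun ω : Ω => (ω.out ∈ D : Prop)) x) ?_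
        obtain ⟨⟨g, hgL⟩, hg⟩ := horb x
        have hkey := key D hqD hHD g hgL x
        have hpar : Par k ((Quotient.mk'' x : Ω).out) = Par k (g 0) + Par k x := by
          rw [← hg]
          exact aff_par (hLA hgL) x
        rw [hg] at hkey
        by_cases hc : Par k (g 0) = 0
        · rw [hc, zero_add] at hpar
          rw [hkey, hpar]
          simp [hc]
        · have hc1 : Par k (g 0) = 1 := zmod2_resolve _ hc
          rw [hc1] at hpar
          have hne : ¬ (Par k x = Par k ((Quotient.mk'' x : Ω).out)) := by
            rw [hpar, add_comm]
            intro hp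
            exact zmod2_add_one_ne _ hp.symm
          rw [hkey]
          simp [hc, hne]
      · -- right inverse
        intro f _
        funext ω
        rw [eq_iff_iff]
        show ω.out ∈ Df f ↔ f ω
        rw [hDf_mem, Quotient.out_eq']
        simp
    rw [hbij, Finset.card_univ, Nat.card_eq_fintype_card]
    rw [Fintype.card_fun, Fintype.card_prop]
end

section
/- Let k be an odd positive integer, S = ℤ/2kℤ, G = Aff(ℤ/2kℤ). Let s(2k) be the number of G-orbits of subsets D ⊆ S with |D| = k, trivial setwise stabilizer G_D = 1, and such that qD = S \ D for some q ∈ G (necessarily a quasipolarity). Let Q_rig(x) = (1/|G|)∑_{A⊆S}[G_A = 1]x^{|A|}. Then Q_rig(-1) = -s(2k). -/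
attribute [local instance] Classical.propDecidable


open Pointwise

/-- The setoid on the subtype of elements of a `G`-set satisfying `P`, identifying two
elements when they lie in the same `G`-orbit. -/
def orbitSetoid (G : Type*) [Group G] {α : Type*} [MulAction G α] (P : α → Prop) :
    Setoid {a : α // P a} where
  r A B := ∃ g : G, g • A.1 = B.1
  iseqv := by
    refine ⟨fun A => ⟨1, one_smul _ _⟩, ?_, ?_⟩
    · rintro A B ⟨g, hg⟩; exact ⟨g⁻¹, by rw [← hg, inv_smul_smul]⟩
    · rintro A B C ⟨g, hg⟩ ⟨g', hg'⟩; exact ⟨g' * g, by rw [mul_smul, hg, hg']⟩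

namespace Stmt19Aux

open scoped symmDiff

variable (k : ℕ) [NeZero (2 * k)]

/-- reduction mod 2 -/
noncomputable def prj : ZMod (2 * k) →+* ZMod 2 := ZMod.castHom ⟨k, rfl⟩ (ZMod 2)

lemma zmod2_cases (z : ZMod 2) : z = 0 ∨ z = 1 := by revert z; decide

lemma prj_natCast (m : ℕ) : prj k (m : ZMod (2 * k)) = (m : ZMod 2) := map_natCast _ m

lemma prj_val (x : ZMod (2 * k)) : prj k x = ((x.val : ℕ) : ZMod 2) := by
  conv_lhs => rw [← ZMod.natCast_rightInverse x]
  exact prj_natCast k _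

lemma prj_eq_zero_iff (x : ZMod (2 * k)) : prj k x = 0 ↔ 2 ∣ x.val := by
  rw [prj_val, ZMod.natCast_eq_zero_iff]

lemma prj_unit (v : (ZMod (2 * k))ˣ) : prj k (v : ZMod (2 * k)) = 1 := by
  have h : IsUnit (prj k (v : ZMod (2 * k))) := (v.isUnit).map (prj k)
  rcases zmod2_cases (prj k (v : ZMod (2 * k))) with h0 | h1
  · rw [h0] at h; rw [isUnit_zero_iff] at h; exact absurd h (by decide)
  · exact h1

lemma unit_mul_k (v : (ZMod (2 * k))ˣ) : (v : ZMod (2 * k)) * (k : ZMod (2 * k)) = k := by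
  have hodd : ¬ (2 ∣ (v : ZMod (2 * k)).val) := by
    intro h
    have := (prj_eq_zero_iff k (v : ZMod (2 * k))).2 h
    rw [prj_unit] at this
    exact absurd this (by decide)
  obtain ⟨t, ht⟩ := Nat.odd_iff.2 (Nat.two_dvd_ne_zero.mp hodd)
  have hv : (v : ZMod (2 * k)) = ((2 * t + 1 : ℕ) : ZMod (2 * k)) := by
    rw [← ht, ZMod.natCast_rightInverse]
  rw [hv]
  push_cast
  ring_nf
  rw [show (t : ZMod (2*k)) * k * 2 = t * (((2*k : ℕ) : ZMod (2*k))) by push_cast; ring,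
    ZMod.natCast_self]
  ring

lemma even_mul_k (u : ZMod (2 * k)) (hu : prj k u = 0) : (k : ZMod (2 * k)) * u = 0 := by
  obtain ⟨t, ht⟩ := (prj_eq_zero_iff k u).1 hu
  have hv : u = ((2 * t : ℕ) : ZMod (2 * k)) := by rw [← ht, ZMod.natCast_rightInverse]
  rw [hv, show ((k : ZMod (2*k)) * ((2 * t : ℕ) : ZMod (2*k))) =
    ((2 * k : ℕ) : ZMod (2*k)) * t by push_cast; ring, ZMod.natCast_self, zero_mul]

end Stmt19Aux

namespace Stmt19Aux
set_option linter.unusedSectionVars false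

variable {k : ℕ} [NeZero (2 * k)]

local notation "S" => ZMod (2 * k)

/-- parity of the translation part of an affine map -/
noncomputable def eps (g : ↥(Aff (2 * k))) : ZMod 2 := prj k ((g : Equiv.Perm S) 0)

lemma smul_point (g : ↥(Aff (2 * k))) (x : S) : g • x = (g : Equiv.Perm S) x := rfl

lemma affPerm_apply (u : S) (v : (ZMod (2*k))ˣ) (x : S) :
    (affPerm (2*k) u v) x = v * x + u := rfl

lemma prj_smul (g : ↥(Aff (2 * k))) (x : S) : prj k (g • x) = prj k x + eps g := by
  obtain ⟨u, v, hg⟩ := g.2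
  rw [smul_point, eps, hg, affPerm_apply, affPerm_apply, map_add, map_add, map_mul, map_mul,
    prj_unit, map_zero]
  ring

lemma eps_mul (g h : ↥(Aff (2 * k))) : eps (g * h) = eps g + eps h := by
  have : eps (g * h) = prj k ((g * h) • (0 : S)) := rfl
  rw [this, mul_smul, prj_smul, prj_smul]
  have : prj k (0 : S) = 0 := map_zero _
  rw [this, zero_add, add_comm]

lemma eps_one : eps (1 : ↥(Aff (2 * k))) = 0 := by
  have : eps (1 : ↥(Aff (2 * k))) = prj k ((1 : ↥(Aff (2 * k))) • (0 : S)) := rfl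
  rw [this, one_smul, map_zero]

lemma eps_inv (g : ↥(Aff (2 * k))) : eps g⁻¹ = eps g := by
  have h := eps_mul g⁻¹ g
  rw [inv_mul_cancel, eps_one] at h
  rcases zmod2_cases (eps g⁻¹) with h1 | h1 <;> rcases zmod2_cases (eps g) with h2 | h2 <;>
    rw [h1, h2] at h ⊢ <;> first | rfl | (exfalso; revert h; decide)

lemma mem_smul_iff (g : ↥(Aff (2 * k))) (A : Finset S) (x : S) : x ∈ g • A ↔ g⁻¹ • x ∈ A := by
  rw [← Finset.mem_inv_smul_finset_iff, inv_inv]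

lemma smul_compl (g : ↥(Aff (2 * k))) (A : Finset S) : g • Aᶜ = (g • A)ᶜ := by
  ext x
  rw [mem_smul_iff, Finset.mem_compl, Finset.mem_compl, mem_smul_iff]

/-- the odd residues -/
noncomputable def odds (k : ℕ) [NeZero (2 * k)] : Finset (ZMod (2 * k)) :=
  Finset.univ.filter (fun x => prj k x = 1)

lemma mem_odds (x : S) : x ∈ odds k ↔ prj k x = 1 := by
  simp [odds]

lemma mem_odds_compl (x : S) : x ∈ (odds k)ᶜ ↔ prj k x = 0 := by
  rw [Finset.mem_compl, mem_odds]
  rcases zmod2_cases (prj k x) with h | h <;> simp [h]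

lemma card_odds (hk : Odd k) : (odds k).card = k := by
  classical
  have hsplit : ((Finset.univ.filter (fun x : S => prj k x = 1)).card +
      (Finset.univ.filter (fun x : S => ¬ prj k x = 1)).card) = Fintype.card S :=
    Finset.card_filter_add_card_filter_not _
  have hcard : Fintype.card S = 2 * k := ZMod.card _
  have hbij : (Finset.univ.filter (fun x : S => ¬ prj k x = 1)).card
      = (Finset.univ.filter (fun x : S => prj k x = 1)).card := by
    apply Finset.card_bij (fun x _ => x + 1)
    · intro a ha
      simp only [Finset.mem_filter, Finset.mem_univ, true_and] at ha ⊢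
      rcases zmod2_cases (prj k a) with h | h
      · rw [map_add, h, map_one, zero_add]
      · exact absurd h ha
    · intro a _ b _ hab
      exact add_right_cancel hab
    · intro b hb
      refine ⟨b - 1, ?_, by ring⟩
      simp only [Finset.mem_filter, Finset.mem_univ, true_and] at hb ⊢
      rw [map_sub, hb, map_one, sub_self]
      decide
  rw [hbij] at hsplit
  have : 2 * (Finset.univ.filter (fun x : S => prj k x = 1)).card = 2 * k := by
    rw [hcard] at hsplit; omega
  have := Nat.eq_of_mul_eq_mul_left (by norm_num) this
  simpa [odds] using this

lemma smul_odds0 (g : ↥(Aff (2 * k))) (h : eps g = 0) : g • odds k = odds k := by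
  ext x
  rw [mem_smul_iff, mem_odds, mem_odds]
  have := prj_smul g⁻¹ x
  rw [eps_inv, h, add_zero] at this
  rw [this]

lemma smul_odds1 (g : ↥(Aff (2 * k))) (h : eps g = 1) : g • odds k = (odds k)ᶜ := by
  ext x
  rw [mem_smul_iff, mem_odds, mem_odds_compl]
  have := prj_smul g⁻¹ x
  rw [eps_inv, h] at this
  rw [this]
  rcases zmod2_cases (prj k x) with h2 | h2 <;> rw [h2] <;> decide

end Stmt19Aux

namespace Stmt19Aux
set_option linter.unusedSectionVars false
open scoped symmDiff

variable {k : ℕ} [NeZero (2 * k)]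

local notation "S" => ZMod (2 * k)

/-- no nontrivial even-translation affine map stabilizes `A` -/
def P1 (A : Finset S) : Prop :=
  ∀ g : ↥(Aff (2 * k)), eps g = 0 → g • A = A → g = 1

/-- no odd-translation affine map stabilizes `A` -/
def P2 (A : Finset S) : Prop :=
  ∀ g : ↥(Aff (2 * k)), eps g = 1 → g • A ≠ A

/-- no odd-translation affine map sends `A` to its complement -/
def P3 (A : Finset S) : Prop :=
  ∀ g : ↥(Aff (2 * k)), eps g = 1 → g • A ≠ Aᶜ

lemma stab_bot_iff (A : Finset S) :
    MulAction.stabilizer ↥(Aff (2 * k)) A = ⊥ ↔ P1 A ∧ P2 A := by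
  constructor
  · intro h
    constructor
    · intro g _ hg
      have : g ∈ MulAction.stabilizer ↥(Aff (2 * k)) A := hg
      rw [h] at this; exact this
    · intro g hg1 hg
      have : g ∈ MulAction.stabilizer ↥(Aff (2 * k)) A := hg
      rw [h] at this
      rw [Subgroup.mem_bot] at this
      rw [this, eps_one] at hg1
      exact absurd hg1 (by decide)
  · rintro ⟨h1, h2⟩
    rw [Subgroup.eq_bot_iff_forall]
    intro g hg
    rw [MulAction.mem_stabilizer_iff] at hg
    rcases zmod2_cases (eps g) with h | h
    · exact h1 g h hg
    · exact absurd hg (h2 g h)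

/-- the sign-reversing involution: symmetric difference with the odds -/
noncomputable def phi (k : ℕ) [NeZero (2 * k)] (A : Finset (ZMod (2 * k))) :
    Finset (ZMod (2 * k)) := A ∆ odds k

lemma phi_phi (A : Finset S) : phi k (phi k A) = A := symmDiff_symmDiff_cancel_right _ _

lemma phi_inj {A B : Finset S} (h : phi k A = phi k B) : A = B := by
  have := congrArg (phi k) h
  rwa [phi_phi, phi_phi] at this

lemma symmDiff_compl_right (A B : Finset S) : A ∆ Bᶜ = (A ∆ B)ᶜ := by
  rw [← hnot_eq_compl, ← hnot_eq_compl, ← symmDiff_top B, ← symmDiff_assoc, symmDiff_top]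

lemma phi_compl (A : Finset S) : phi k (Aᶜ) = (phi k A)ᶜ := by
  unfold phi
  rw [symmDiff_comm, symmDiff_compl_right, symmDiff_comm]

lemma smul_phi0 (g : ↥(Aff (2 * k))) (h : eps g = 0) (A : Finset S) :
    g • phi k A = phi k (g • A) := by
  unfold phi
  rw [Finset.smul_finset_symmDiff, smul_odds0 g h]

lemma smul_phi1 (g : ↥(Aff (2 * k))) (h : eps g = 1) (A : Finset S) :
    g • phi k A = (phi k (g • A))ᶜ := by
  unfold phi
  rw [Finset.smul_finset_symmDiff, smul_odds1 g h, symmDiff_compl_right]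

lemma P1_phi (A : Finset S) : P1 (phi k A) ↔ P1 A := by
  have key : ∀ (g : ↥(Aff (2 * k))), eps g = 0 → (g • phi k A = phi k A ↔ g • A = A) := by
    intro g hg
    rw [smul_phi0 g hg]
    exact ⟨fun h => phi_inj h, fun h => by rw [h]⟩
  constructor
  · intro h g hg hgA; exact h g hg ((key g hg).2 hgA)
  · intro h g hg hgA; exact h g hg ((key g hg).1 hgA)

lemma P2_phi (A : Finset S) : P2 (phi k A) ↔ P3 A := by
  have key : ∀ (g : ↥(Aff (2 * k))), eps g = 1 → (g • phi k A = phi k A ↔ g • A = Aᶜ) := by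
    intro g hg
    rw [smul_phi1 g hg]
    constructor
    · intro h
      have : phi k (g • A) = (phi k A)ᶜ := by rw [← h, compl_compl]
      rw [← phi_compl] at this
      exact phi_inj this
    · intro h
      rw [h, phi_compl, compl_compl]
  constructor
  · intro h g hg hgA; exact h g hg ((key g hg).2 hgA)
  · intro h g hg hgA; exact h g hg ((key g hg).1 hgA)

lemma P3_phi (A : Finset S) : P3 (phi k A) ↔ P2 A := by
  have key : ∀ (g : ↥(Aff (2 * k))), eps g = 1 → (g • phi k A = (phi k A)ᶜ ↔ g • A = A) := by
    intro g hg
    rw [smul_phi1 g hg]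
    exact ⟨fun h => phi_inj (compl_injective h), fun h => by rw [h]⟩
  constructor
  · intro h g hg hgA; exact h g hg ((key g hg).2 hgA)
  · intro h g hg hgA; exact h g hg ((key g hg).1 hgA)

lemma card_phi_parity (hk : Odd k) (A : Finset S) :
    Odd ((phi k A).card + A.card) := by
  classical
  have c1 : (phi k A).card = (A \ odds k).card + (odds k \ A).card := by
    unfold phi
    rw [symmDiff_def]
    exact Finset.card_union_of_disjoint disjoint_sdiff_sdiff
  have c2 : (A \ odds k).card + (A ∩ odds k).card = A.card :=
    Finset.card_sdiff_add_card_inter _ _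
  have c3 : (odds k \ A).card + (odds k ∩ A).card = (odds k).card :=
    Finset.card_sdiff_add_card_inter _ _
  have c4 : (A ∩ odds k).card = (odds k ∩ A).card := by rw [Finset.inter_comm]
  have c5 : (odds k).card = k := card_odds hk
  rw [Nat.odd_iff] at hk ⊢
  omega

lemma neg_one_pow_phi (hk : Odd k) (A : Finset S) :
    (-1 : ℚ) ^ (phi k A).card = -(-1 : ℚ) ^ A.card := by
  have h := card_phi_parity hk A
  have h1 : (-1 : ℚ) ^ ((phi k A).card + A.card) = -1 := h.neg_one_pow
  rw [pow_add] at h1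
  rcases Nat.even_or_odd A.card with h2 | h2
  · rw [h2.neg_one_pow] at h1; rw [h2.neg_one_pow]; rw [mul_one] at h1; rw [h1]
  · rw [h2.neg_one_pow] at h1; rw [h2.neg_one_pow]
    have : (-1 : ℚ) ^ (phi k A).card = 1 := by linarith [h1]
    rw [this]; norm_num

end Stmt19Aux

namespace Stmt19Aux
set_option linter.unusedSectionVars false

variable {k : ℕ} [NeZero (2 * k)]

local notation "S" => ZMod (2 * k)

/-- A rigid set cannot be mapped to its complement by an even-translation affine map:
such a map would be an involution fixing an explicit point. -/
lemma no_even_quasi (hk : Odd k) (A : Finset S)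
    (hstab : MulAction.stabilizer ↥(Aff (2 * k)) A = ⊥)
    (g : ↥(Aff (2 * k))) (h0 : eps g = 0) (hgA : g • A = Aᶜ) : False := by
  have hg2A : (g * g) • A = A := by
    rw [mul_smul, hgA, smul_compl, hgA, compl_compl]
  have hg2 : g * g = 1 := by
    have : g * g ∈ MulAction.stabilizer ↥(Aff (2 * k)) A := hg2A
    rw [hstab, Subgroup.mem_bot] at this
    exact this
  obtain ⟨u, v, hg⟩ := g.2
  have hpt : ∀ y : S, (v : S) * ((v : S) * y + u) + u = y := by
    intro y
    have h1 : ((g * g : ↥(Aff (2 * k))) : Equiv.Perm S) y = y := by rw [hg2]; rfl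
    have h2 : ((g * g : ↥(Aff (2 * k))) : Equiv.Perm S) y
        = (g : Equiv.Perm S) ((g : Equiv.Perm S) y) := rfl
    rw [h2, hg] at h1
    rw [affPerm_apply, affPerm_apply] at h1
    exact h1
  have hvu : (v : S) * u + u = 0 := by
    have := hpt 0
    rwa [mul_zero, zero_add] at this
  -- `prj u = 0`
  have hprju : prj k u = 0 := by
    have : eps g = prj k u := by
      rw [eps, hg, affPerm_apply, mul_zero, zero_add]
    rw [← this, h0]
  -- the fixed point
  set m : ℕ := (k + 1) / 2 with hm
  have h2m : 2 * m = k + 1 := by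
    rw [Nat.odd_iff] at hk; omega
  set x : S := (m : S) * u + (k : S) with hx
  have hfix : (v : S) * x + u = x := by
    have hvk : (v : S) * (k : S) = (k : S) := unit_mul_k k v
    have hku : (k : S) * u = 0 := even_mul_k k u hprju
    have hvuu : (v : S) * u = -u := by
      have := hvu; linear_combination this
    have h2mu : (2 * m : ℕ) * u = u + (k : S) * u := by
      rw [h2m]; push_cast; ring
    have hmu : (m : S) * u + (m : S) * u = u := by
      have : ((2 * m : ℕ) : S) * u = u := by rw [h2mu, hku, add_zero]
      push_cast at this
      linear_combination this
    rw [hx]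
    rw [mul_add, ← mul_assoc, mul_comm ((v:S)) ((m:S)), mul_assoc, hvuu, hvk]
    linear_combination -hmu
  have hgx : g • x = x := by
    rw [smul_point, hg, affPerm_apply, hfix]
  have hginvx : g⁻¹ • x = x := by
    conv_lhs => rw [← hgx]
    rw [← mul_smul, inv_mul_cancel, one_smul]
  have hmem : x ∈ Aᶜ ↔ x ∈ A := by
    rw [← hgA, mem_smul_iff, hginvx]
  rw [Finset.mem_compl] at hmem
  by_cases hxa : x ∈ A
  · exact (hmem.2 hxa) hxa
  · exact hxa (hmem.1 hxa)

end Stmt19Aux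

namespace Stmt19Aux

open Classical in
/-- Free actions: the number of elements satisfying an invariant predicate with trivial
stabilizers equals the number of orbits times the order of the group. -/
lemma orbit_count {G α : Type*} [Group G] [Fintype G] [Fintype α] [MulAction G α]
    (P : α → Prop)
    (hstab : ∀ a, P a → ∀ g : G, g • a = a → g = 1)
    (hsmul : ∀ (g : G) (a : α), P a → P (g • a)) :
    Nat.card {a : α // P a} =
      Nat.card (Quotient (orbitSetoid G P)) * Fintype.card G := by
  classical
  rw [Nat.card_eq_fintype_card]
  have e : {a : α // P a} ≃
      Σ q : Quotient (orbitSetoid G P), {b : {a : α // P a} // Quotient.mk (orbitSetoid G P) b = q} :=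
    (Equiv.sigmaFiberEquiv _).symm
  rw [Fintype.card_congr e, Fintype.card_sigma, Nat.card_eq_fintype_card]
  have hfib : ∀ q : Quotient (orbitSetoid G P),
      Fintype.card {b : {a : α // P a} // Quotient.mk (orbitSetoid G P) b = q}
        = Fintype.card G := by
    intro q
    obtain ⟨a0, rfl⟩ := Quotient.exists_rep q
    have hbij : Function.Bijective (fun g : G =>
        (⟨⟨g • a0.1, hsmul g a0.1 a0.2⟩, Quotient.sound ⟨g⁻¹, by simp⟩⟩ :
          {b : {a : α // P a} // Quotient.mk (orbitSetoid G P) b = Quotient.mk _ a0})) := by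
      constructor
      · intro g g' hgg'
        have h1 : g • a0.1 = g' • a0.1 := by
          have := congrArg (fun z => z.1.1) hgg'
          exact this
        have h2 : (g'⁻¹ * g) • a0.1 = a0.1 := by
          rw [mul_smul, h1, inv_smul_smul]
        have := hstab a0.1 a0.2 _ h2
        rw [inv_mul_eq_one] at this
        exact this.symm
      · rintro ⟨⟨b, hb⟩, hq⟩
        obtain ⟨g, hg⟩ := Quotient.exact hq
        refine ⟨g⁻¹, ?_⟩
        apply Subtype.ext
        apply Subtype.ext
        show g⁻¹ • a0.1 = b
        rw [← hg, inv_smul_smul]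
    exact (Fintype.card_of_bijective hbij).symm
  rw [Finset.sum_congr rfl (fun q _ => hfib q), Finset.sum_const, smul_eq_mul,
    Finset.card_univ]

end Stmt19Aux

namespace Stmt19Aux
set_option linter.unusedSectionVars false

variable {k : ℕ} [NeZero (2 * k)]

local notation "S" => ZMod (2 * k)

lemma PD_smul (g : ↥(Aff (2 * k))) (A : Finset S)
    (h : A.card = k ∧ MulAction.stabilizer ↥(Aff (2 * k)) A = ⊥ ∧
      ∃ q : ↥(Aff (2 * k)), q • A = Aᶜ) :
    (g • A).card = k ∧ MulAction.stabilizer ↥(Aff (2 * k)) (g • A) = ⊥ ∧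
      ∃ q : ↥(Aff (2 * k)), q • (g • A) = (g • A)ᶜ := by
  obtain ⟨hc, hs, q, hq⟩ := h
  refine ⟨by rw [Finset.card_smul_finset]; exact hc, ?_, ⟨g * q * g⁻¹, ?_⟩⟩
  · rw [MulAction.stabilizer_smul_eq_stabilizer_map_conj, hs, Subgroup.map_bot]
  · rw [mul_smul, mul_smul, inv_smul_smul, hq, smul_compl]

lemma b_iff (hk : Odd k) (A : Finset S) :
    (P1 A ∧ P2 A ∧ ¬ P3 A) ↔
    (A.card = k ∧ MulAction.stabilizer ↥(Aff (2 * k)) A = ⊥ ∧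
      ∃ q : ↥(Aff (2 * k)), q • A = Aᶜ) := by
  constructor
  · rintro ⟨h1, h2, h3⟩
    have hstab := (stab_bot_iff A).2 ⟨h1, h2⟩
    unfold P3 at h3
    push_neg at h3
    obtain ⟨g, _, hgA⟩ := h3
    refine ⟨?_, hstab, g, hgA⟩
    have hcc : A.card = Aᶜ.card := by rw [← hgA, Finset.card_smul_finset]
    have hcompl : Aᶜ.card = Fintype.card S - A.card := Finset.card_compl A
    have hS : Fintype.card S = 2 * k := ZMod.card _
    have hle : A.card ≤ Fintype.card S := by
      rw [← Finset.card_univ]; exact Finset.card_le_univ A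
    omega
  · rintro ⟨hc, hs, q, hq⟩
    obtain ⟨h1, h2⟩ := (stab_bot_iff A).1 hs
    refine ⟨h1, h2, ?_⟩
    intro h3
    rcases zmod2_cases (eps q) with h | h
    · exact no_even_quasi hk A hs q h hq
    · exact h3 q h hq

end Stmt19Aux


open Stmt19Aux

/-- Main theorem: for `k` an odd positive integer, `Q_rig(-1) = -s(2k)`, where `s(2k)` is
the number of `Aff(ℤ/2kℤ)`-orbits of strong dichotomies (self-complementary rigid
`k`-subsets) and `Q_rig` is the rigid pattern-inventory polynomial. -/
theorem stmt_19 (k : ℕ) (hk : Odd k) (hk0 : 0 < k) [NeZero (2 * k)] :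
    (Fintype.card ↥(Aff (2 * k)) : ℚ)⁻¹ *
        (∑ A : Finset (ZMod (2 * k)),
          if MulAction.stabilizer ↥(Aff (2 * k)) A = ⊥ then (-1 : ℚ) ^ A.card else 0) =
      -(Nat.card (Quotient (orbitSetoid ↥(Aff (2 * k))
          (fun D : Finset (ZMod (2 * k)) =>
            D.card = k ∧ MulAction.stabilizer ↥(Aff (2 * k)) D = ⊥ ∧
              ∃ q : ↥(Aff (2 * k)), q • D = Dᶜ))) : ℚ) := by
  classical
  set P : Finset (ZMod (2 * k)) → Prop := fun D =>
    D.card = k ∧ MulAction.stabilizer ↥(Aff (2 * k)) D = ⊥ ∧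
      ∃ q : ↥(Aff (2 * k)), q • D = Dᶜ with hPdef
  -- reindexing along the involution `phi`
  have h_reindex : ∀ F : Finset (ZMod (2 * k)) → ℚ,
      (∑ A : Finset (ZMod (2 * k)), F (phi k A)) = ∑ A : Finset (ZMod (2 * k)), F A :=
    fun F => Fintype.sum_bijective (phi k)
      (Function.Involutive.bijective (fun A => phi_phi A)) _ _ (fun A => rfl)
  set T : ℚ := ∑ A : Finset (ZMod (2 * k)),
      if MulAction.stabilizer ↥(Aff (2 * k)) A = ⊥ then (-1 : ℚ) ^ A.card else 0 with hT
  set Sa : ℚ := ∑ A : Finset (ZMod (2 * k)),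
      if P1 A ∧ P2 A ∧ P3 A then (-1 : ℚ) ^ A.card else 0 with hSa
  set Sb : ℚ := ∑ A : Finset (ZMod (2 * k)),
      if P1 A ∧ P2 A ∧ ¬ P3 A then (-1 : ℚ) ^ A.card else 0 with hSb
  set Sc : ℚ := ∑ A : Finset (ZMod (2 * k)),
      if P1 A ∧ ¬ P2 A ∧ P3 A then (-1 : ℚ) ^ A.card else 0 with hSc
  -- T in terms of P1, P2
  have e1 : T = Sa + Sb := by
    rw [hT, hSa, hSb, ← Finset.sum_add_distrib]
    apply Finset.sum_congr rfl
    intro A _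
    rw [stab_bot_iff]
    by_cases h1 : P1 A <;> by_cases h2 : P2 A <;> by_cases h3 : P3 A <;>
      simp [h1, h2, h3]
  -- T via the involution, in terms of P1, P3
  have e2 : T = -(Sa + Sc) := by
    have step : T = ∑ A : Finset (ZMod (2 * k)),
        (if MulAction.stabilizer ↥(Aff (2 * k)) (phi k A) = ⊥
          then (-1 : ℚ) ^ (phi k A).card else 0) := by
      rw [hT, h_reindex (fun A => if MulAction.stabilizer ↥(Aff (2 * k)) A = ⊥
        then (-1 : ℚ) ^ A.card else 0)]
    rw [step, hSa, hSc, ← Finset.sum_add_distrib, ← Finset.sum_neg_distrib]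
    apply Finset.sum_congr rfl
    intro A _
    have hiff : (MulAction.stabilizer ↥(Aff (2 * k)) (phi k A) = ⊥) ↔ (P1 A ∧ P3 A) := by
      rw [stab_bot_iff, P1_phi, P2_phi]
    rw [hiff, neg_one_pow_phi hk]
    by_cases h1 : P1 A <;> by_cases h2 : P2 A <;> by_cases h3 : P3 A <;>
      simp [h1, h2, h3]
  -- Sc = -Sb via the involution
  have e3 : Sc = -Sb := by
    have step : Sc = ∑ A : Finset (ZMod (2 * k)),
        (if P1 (phi k A) ∧ ¬ P2 (phi k A) ∧ P3 (phi k A)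
          then (-1 : ℚ) ^ (phi k A).card else 0) := by
      rw [hSc, h_reindex (fun A => if P1 A ∧ ¬ P2 A ∧ P3 A then (-1 : ℚ) ^ A.card else 0)]
    rw [step, hSb, ← Finset.sum_neg_distrib]
    apply Finset.sum_congr rfl
    intro A _
    rw [P1_phi, P2_phi, P3_phi, neg_one_pow_phi hk]
    by_cases h1 : P1 A <;> by_cases h2 : P2 A <;> by_cases h3 : P3 A <;>
      simp [h1, h2, h3]
  have hSa0 : Sa = 0 := by
    rw [e3] at e2
    rw [e1] at e2
    linarith
  have hTSb : T = Sb := by rw [e1, hSa0, zero_add]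
  -- Sb counts strong dichotomies with a (-1) sign
  have e4 : Sb = -((Finset.univ.filter P).card : ℚ) := by
    rw [hSb]
    have : ∀ A : Finset (ZMod (2 * k)),
        (if P1 A ∧ P2 A ∧ ¬ P3 A then (-1 : ℚ) ^ A.card else 0)
          = -(if P A then (1 : ℚ) else 0) := by
      intro A
      by_cases hA : P A
      · have hb := (b_iff hk A).2 hA
        have hcard : A.card = k := hA.1
        rw [if_pos hb, if_pos hA, hcard, hk.neg_one_pow]
      · have hb : ¬ (P1 A ∧ P2 A ∧ ¬ P3 A) := fun h => hA ((b_iff hk A).1 h)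
        rw [if_neg hb, if_neg hA, neg_zero]
    rw [Finset.sum_congr rfl (fun A _ => this A), Finset.sum_neg_distrib, Finset.sum_boole]
  -- the orbit count
  have e5 : ((Finset.univ.filter P).card : ℕ)
      = Nat.card (Quotient (orbitSetoid ↥(Aff (2 * k)) P)) * Fintype.card ↥(Aff (2 * k)) := by
    rw [← Fintype.card_subtype, ← Nat.card_eq_fintype_card]
    apply orbit_count
    · intro A hA g hg
      have : g ∈ MulAction.stabilizer ↥(Aff (2 * k)) A := hg
      rw [hA.2.1, Subgroup.mem_bot] at this
      exact this
    · intro g A hA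
      exact PD_smul g A hA
  have hG0 : (Fintype.card ↥(Aff (2 * k)) : ℚ) ≠ 0 :=
    Nat.cast_ne_zero.2 Fintype.card_ne_zero
  rw [hTSb, e4, e5]
  push_cast
  field_simp
end
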